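/- Suppose (Z,d) is a uniformly perfect compact metric space, and G ↷ Z is a fixed point free uniformly quasi-Möbius action by homeomorphisms which is cocompact on the space Tri(Z) of distinct triples. Then the action is minimal: for all z, z' ∈ Z and all ε > 0, there is a group element g ∈ G such that d(g(z'), z) < ε. -/

import Mathlib

open Metric Set MeasureTheory Filter Topology unitInterval
open scoped NNReal ENNReal

noncomputable section

/-- The length (total variation) of a continuous path. -/
def pathLength {Z : Type*} [MetricSpace Z] (γ : C(unitInterval, Z)) : ℝ≥0∞ :=
  eVariationOn γ Set.univ

/-- The (real-valued) arclength function of a path. -/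
def pathVar {Z : Type*} [MetricSpace Z] (γ : C(unitInterval, Z)) (t : ℝ) : ℝ :=
  (eVariationOn γ {s : unitInterval | (s : ℝ) ≤ t}).toReal

/-- The arclength (Stieltjes) measure on the parameter interval associated to a path. -/
def lengthMeasure {Z : Type*} [MetricSpace Z] (γ : C(unitInterval, Z)) :
    MeasureTheory.Measure ℝ :=
  letI := Classical.propDecidable (Monotone (pathVar γ))
  if h : Monotone (pathVar γ) then h.stieltjesFunction.measure else 0

/-- The line integral `∫_γ ρ ds` of a density `ρ` along a path `γ` (with respect to
arclength). -/
def pathIntegral {Z : Type*} [MetricSpace Z] (ρ : Z → ℝ≥0∞) (γ : C(unitInterval, Z)) : ℝ≥0∞ :=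
  ∫⁻ t, ρ (γ (Set.projIcc 0 1 zero_le_one t)) ∂(lengthMeasure γ)

/-- A density is admissible for a path family if every rectifiable path in the family has
`ρ`-length at least one. -/
def Admissible {Z : Type*} [MetricSpace Z] (ρ : Z → ℝ≥0∞) (Γ : Set C(unitInterval, Z)) : Prop :=
  ∀ γ ∈ Γ, pathLength γ < ⊤ → 1 ≤ pathIntegral ρ γ

/-- The `Q`-modulus of a family of paths in `Z`. -/
def modulus {Z : Type*} [MetricSpace Z] [MeasurableSpace Z] (Q : ℝ) (μ : Measure Z)
    (Γ : Set C(unitInterval, Z)) : ℝ≥0∞ :=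
  ⨅ (ρ : Z → ℝ≥0∞) (_ : Measurable ρ) (_ : Admissible ρ Γ), ∫⁻ z, ρ z ^ Q ∂μ

/-- A path is nonconstant if it takes at least two values. -/
def Nonconstant {Z : Type*} [MetricSpace Z] (γ : C(unitInterval, Z)) : Prop :=
  ∃ s t, γ s ≠ γ t

/-- A measure `μ` on a metric space is Ahlfors `Q`-regular. -/
def AhlforsRegular {Z : Type*} [MetricSpace Z] [MeasurableSpace Z] (μ : Measure Z)
    (Q : ℝ) : Prop :=
  ∃ C : ℝ≥0, 1 ≤ C ∧ ∀ (a : Z) (R : ℝ), 0 < R →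
    ENNReal.ofReal R ≤ EMetric.diam (Set.univ : Set Z) →
      ENNReal.ofReal (R ^ Q) / C ≤ μ (Metric.ball a R) ∧
      μ (Metric.ball a R) ≤ C * ENNReal.ofReal (R ^ Q)

/-- The metric cross-ratio of a four-tuple of points. -/
def crossRatio {Z : Type*} [MetricSpace Z] (z₁ z₂ z₃ z₄ : Z) : ℝ≥0 :=
  (nndist z₁ z₃ * nndist z₂ z₄) / (nndist z₁ z₄ * nndist z₂ z₃)

/-- A map is `η`-quasi-Möbius if it distorts cross-ratios of distinct four-tuples in a way
controlled by the homeomorphism `η : [0,∞) → [0,∞)`. -/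
def IsQuasiMobius {X Y : Type*} [MetricSpace X] [MetricSpace Y] (η : ℝ≥0 ≃ₜ ℝ≥0)
    (f : X → Y) : Prop :=
  ∀ x₁ x₂ x₃ x₄ : X, x₁ ≠ x₂ → x₁ ≠ x₃ → x₁ ≠ x₄ → x₂ ≠ x₃ → x₂ ≠ x₄ → x₃ ≠ x₄ →
    crossRatio (f x₁) (f x₂) (f x₃) (f x₄) ≤ η (crossRatio x₁ x₂ x₃ x₄)

/-- A map is `η`-quasisymmetric. -/
def IsQuasisymmetric {X Y : Type*} [MetricSpace X] [MetricSpace Y] (η : ℝ≥0 ≃ₜ ℝ≥0)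
    (f : X → Y) : Prop :=
  ∀ x₁ x₂ x₃ : X, x₁ ≠ x₂ → x₁ ≠ x₃ → x₂ ≠ x₃ →
    nndist (f x₁) (f x₂) / nndist (f x₁) (f x₃) ≤ η (nndist x₁ x₂ / nndist x₁ x₃)

/-- A metric space is Ahlfors `Q`-regular (with respect to `Q`-dimensional Hausdorff
measure). -/
def AhlforsRegularSpace (Y : Type*) [MetricSpace Y] (Q : ℝ) : Prop :=
  letI : MeasurableSpace Y := borel Y
  haveI : BorelSpace Y := ⟨rfl⟩
  AhlforsRegular (μH[Q] : Measure Y) Q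

/-- The Ahlfors regular conformal dimension of a metric space: the infimum of the Hausdorff
dimensions of all Ahlfors regular metric spaces quasisymmetrically homeomorphic to it. -/
def arConfDim (Z : Type u) [MetricSpace Z] : ℝ≥0∞ :=
  sInf { D : ℝ≥0∞ | ∃ (Y : Type u) (_ : MetricSpace Y) (Q' : ℝ) (η : ℝ≥0 ≃ₜ ℝ≥0) (f : Z ≃ₜ Y),
      AhlforsRegularSpace Y Q' ∧ IsQuasisymmetric η f ∧ D = dimH (Set.univ : Set Y) }

/-- The distance between two subsets of a metric space, as an extended real. -/
def setSep {Z : Type*} [MetricSpace Z] (E F : Set Z) : ℝ≥0∞ :=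
  ⨅ (x ∈ E) (y ∈ F), edist x y

/-- The relative distance `Δ(E,F) = dist(E,F)/min(diam E, diam F)` of two sets. -/
def relDist {Z : Type*} [MetricSpace Z] (E F : Set Z) : ℝ≥0∞ :=
  setSep E F / min (EMetric.diam E) (EMetric.diam F)

/-- The family of paths joining `E` to `F`. -/
def joinPaths {Z : Type*} [MetricSpace Z] (E F : Set Z) : Set C(unitInterval, Z) :=
  {γ | γ 0 ∈ E ∧ γ 1 ∈ F}

/-- A metric measure space is `Q`-Loewner if it is connected and the `Q`-modulus of the family
of paths joining two disjoint nondegenerate continua is bounded below by a positive decreasing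
function of their relative distance. -/
def IsLoewner (Z : Type*) [MetricSpace Z] [MeasurableSpace Z] (Q : ℝ) (μ : Measure Z) : Prop :=
  ConnectedSpace Z ∧
  ∃ Ψ : ℝ≥0∞ → ℝ≥0∞, Antitone Ψ ∧ (∀ t, t ≠ 0 → t ≠ ⊤ → 0 < Ψ t) ∧
    ∀ E F : Set Z, IsCompact E → IsConnected E → E.Nontrivial →
      IsCompact F → IsConnected F → F.Nontrivial → Disjoint E F →
      Ψ (relDist E F) ≤ modulus Q μ (joinPaths E F)

/-- A path is thick if every neighborhood of it in `C([0,1],Z)` contains a family of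
nonconstant paths of positive `Q`-modulus. -/
def IsThick {Z : Type*} [MetricSpace Z] [MeasurableSpace Z] (Q : ℝ) (μ : Measure Z)
    (γ : C(unitInterval, Z)) : Prop :=
  ∀ ε : ℝ, 0 < ε → 0 < modulus Q μ {α | α ∈ Metric.ball γ ε ∧ Nonconstant α}

end


private lemma eta_map_zero (η : ℝ≥0 ≃ₜ ℝ≥0) : η 0 = 0 := by
  by_contra h
  have h1 : IsPreconnected (η '' Set.Ioi (0:ℝ≥0)) :=
    isPreconnected_Ioi.image _ η.continuous.continuousOn
  have h2 : η '' Set.Ioi (0:ℝ≥0) = {η 0}ᶜ := by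
    have he : (Set.Ioi (0:ℝ≥0)) = ({(0:ℝ≥0)}ᶜ : Set ℝ≥0) := by
      ext x; simp [pos_iff_ne_zero]
    rw [he, Set.image_compl_eq η.bijective, Set.image_singleton]
  rw [h2] at h1
  have h3 := h1.ordConnected
  have h0 : (0:ℝ≥0) ∈ ({η 0}ᶜ : Set ℝ≥0) := by simpa using (Ne.symm h)
  have h4 : η 0 + 1 ∈ ({η 0}ᶜ : Set ℝ≥0) := by
    simp only [Set.mem_compl_iff, Set.mem_singleton_iff]
    intro e
    nth_rewrite 2 [← add_zero (η 0)] at e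
    exact one_ne_zero (add_left_cancel e)
  have h5 := h3.out h0 h4 ⟨zero_le, le_self_add⟩
  simp at h5

private lemma eta_small (η : ℝ≥0 ≃ₜ ℝ≥0) {τ : ℝ≥0} (hτ : 0 < τ) :
    ∃ t : ℝ≥0, 0 < t ∧ ∀ x ≤ t, η x < τ := by
  have h0 : Filter.Tendsto η (𝓝 0) (𝓝 0) := by
    have hc := η.continuous.continuousAt (x := (0:ℝ≥0))
    rwa [ContinuousAt, eta_map_zero] at hc
  have hev : ∀ᶠ x : ℝ≥0 in 𝓝 0, η x < τ := by
    have hlt : ∀ᶠ y : ℝ≥0 in 𝓝 0, y < τ := by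
      filter_upwards [Iio_mem_nhds hτ] with y hy; exact hy
    exact h0.eventually hlt
  obtain ⟨t, ht, hsub⟩ := NNReal.nhds_zero_basis.eventually_iff.mp hev
  refine ⟨t/2, by positivity, fun x hx => ?_⟩
  exact hsub (lt_of_le_of_lt hx (NNReal.half_lt_self ht.ne'))

private lemma crossRatio_coe {Z : Type*} [MetricSpace Z] (a b c d : Z) :
    (crossRatio a b c d : ℝ) = dist a c * dist b d / (dist a d * dist b c) := by
  simp [crossRatio, NNReal.coe_div, NNReal.coe_mul, coe_nndist]


set_option maxHeartbeats 2000000 in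
theorem minimal_of_cocompact_on_triples
    {Z : Type*} [MetricSpace Z] [CompactSpace Z]
    (hup : ∃ lam : ℝ, 1 < lam ∧ ∀ (a : Z) (R : ℝ), 0 < R →
      R ≤ Metric.diam (Set.univ : Set Z) →
      (Metric.ball a R \ Metric.ball a (R / lam)).Nonempty)
    {G : Type*} [Group G] [MulAction G Z]
    (hcont : ∀ g : G, Continuous fun z : Z => g • z)
    (η : ℝ≥0 ≃ₜ ℝ≥0) (hqm : ∀ g : G, IsQuasiMobius η fun z : Z => g • z)
    (hfree : ∀ z : Z, ∃ g : G, g • z ≠ z)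
    (hcocpt : ∃ δ : ℝ, 0 < δ ∧ ∀ z₁ z₂ z₃ : Z, z₁ ≠ z₂ → z₁ ≠ z₃ → z₂ ≠ z₃ →
      ∃ g : G, δ ≤ dist (g • z₁) (g • z₂) ∧ δ ≤ dist (g • z₁) (g • z₃) ∧
        δ ≤ dist (g • z₂) (g • z₃))
    : ∀ (z z' : Z) (ε : ℝ), 0 < ε → ∃ g : G, dist (g • z') z < ε := by
  classical
  obtain ⟨lam, hlam, hperf⟩ := hup
  obtain ⟨δ, hδ, hsep⟩ := hcocpt
  intro z z' ε hε
  by_cases htriv : dist z' z < ε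
  · exact ⟨1, by simpa using htriv⟩
  push_neg at htriv
  have hbdd : Bornology.IsBounded (Set.univ : Set Z) := isCompact_univ.isBounded
  set D : ℝ := Metric.diam (Set.univ : Set Z) with hDdef
  have hdistD : ∀ x y : Z, dist x y ≤ D := fun x y =>
    Metric.dist_le_diam_of_mem hbdd (Set.mem_univ x) (Set.mem_univ y)
  have hεD : ε ≤ D := le_trans htriv (hdistD z' z)
  have hDpos : 0 < D := lt_of_lt_of_le hε hεD
  have hlam0 : (0:ℝ) < lam := lt_trans one_pos hlam
  set s : ℝ := ε/4 with hsdef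
  have hs : 0 < s := by positivity
  -- target threshold
  have hτpos : (0:ℝ) < δ^2/(8*D^2) :=
    div_pos (pow_pos hδ 2) (by positivity)
  obtain ⟨t, ht, htprop⟩ := eta_small η (Real.toNNReal_pos.mpr hτpos)
  set r : ℝ := min (s/2) ((t:ℝ) * s^2/(2*D)) with hrdef
  have htpos : (0:ℝ) < (t:ℝ) := ht
  have hr : 0 < r := lt_min (by positivity) (by positivity)
  have hrs : r ≤ s/2 := min_le_left _ _
  have hrt : r ≤ (t:ℝ)*s^2/(2*D) := min_le_right _ _
  have hrD : r ≤ D := le_trans hrs (by linarith)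
  -- two auxiliary points near z
  obtain ⟨x₁, hx₁⟩ := hperf z r hr hrD
  have h1a : dist x₁ z < r := Metric.mem_ball.mp hx₁.1
  have h1b : r/lam ≤ dist x₁ z := not_lt.mp (fun hh => hx₁.2 (Metric.mem_ball.mpr hh))
  obtain ⟨x₂, hx₂⟩ := hperf z (r/lam^2) (by positivity)
    (le_trans (div_le_self hr.le ((by nlinarith : (1:ℝ) ≤ lam^2))) hrD)
  have h2a : dist x₂ z < r/lam^2 := Metric.mem_ball.mp hx₂.1
  have h2b : (r/lam^2)/lam ≤ dist x₂ z := not_lt.mp (fun hh => hx₂.2 (Metric.mem_ball.mpr hh))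
  have hx1z : x₁ ≠ z := by
    intro e; rw [e, dist_self] at h1b
    have : 0 < r/lam := by positivity
    linarith
  have hx2z : x₂ ≠ z := by
    intro e; rw [e, dist_self] at h2b
    have : 0 < (r/lam^2)/lam := by positivity
    linarith
  have hlt12 : r/lam^2 < r/lam := by
    rw [div_lt_div_iff₀ (by positivity) (by positivity)]
    nlinarith [mul_pos hr (mul_pos hlam0 (sub_pos.mpr hlam))]
  have hx12 : x₁ ≠ x₂ := by
    intro e; rw [e] at h1b; linarith
  obtain ⟨h, hh1, hh2, hh3⟩ := hsep z x₁ x₂ (Ne.symm hx1z) (Ne.symm hx2z) hx12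
  -- key contraction estimate
  have key : ∀ w₁ w₂ : Z, w₁ ≠ w₂ → s ≤ dist w₁ z → s ≤ dist w₂ z →
      dist (h • w₁) (h • w₂) < δ/8 := by
    intro w₁ w₂ hne hw₁ hw₂
    have hw1x1 : w₁ ≠ x₁ := by intro e; rw [e] at hw₁; linarith
    have hx1w2 : x₁ ≠ w₂ := by intro e; rw [← e] at hw₂; linarith
    have hw1z : w₁ ≠ z := by
      intro e; rw [e, dist_self] at hw₁; linarith
    have hw2z : w₂ ≠ z := by
      intro e; rw [e, dist_self] at hw₂; linarith
    have hqmh : crossRatio (h • w₁) (h • x₁) (h • w₂) (h • z)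
        ≤ η (crossRatio w₁ x₁ w₂ z) :=
      hqm h w₁ x₁ w₂ z hw1x1 hne hw1z hx1w2 hx1z hw2z
    -- distance from x₁ to w₂
    have hx1w2d : s/2 ≤ dist x₁ w₂ := by
      have htr := dist_triangle w₂ x₁ z
      rw [dist_comm w₂ x₁] at htr
      linarith
    -- source cross-ratio bound
    have hsrcR : (crossRatio w₁ x₁ w₂ z : ℝ) ≤ (t:ℝ) := by
      rw [crossRatio_coe]
      have step1 : dist w₁ w₂ * dist x₁ z / (dist w₁ z * dist x₁ w₂)
          ≤ D * r / (s * (s/2)) := by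
        apply div_le_div₀ (by positivity)
        · exact mul_le_mul (hdistD _ _) h1a.le dist_nonneg hDpos.le
        · positivity
        · exact mul_le_mul hw₁ hx1w2d (by positivity) (le_trans hs.le hw₁)
      refine le_trans step1 ?_
      rw [div_le_iff₀ (by positivity)]
      have hrt' : r * (2*D) ≤ (t:ℝ) * s^2 := by
        rwa [← le_div_iff₀ (by positivity)]
      nlinarith
    have hsrc : crossRatio w₁ x₁ w₂ z ≤ t := by
      rw [← NNReal.coe_le_coe]; exact hsrcR
    have himg : crossRatio (h • w₁) (h • x₁) (h • w₂) (h • z)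
        < Real.toNNReal (δ^2/(8*D^2)) :=
      lt_of_le_of_lt hqmh (htprop _ hsrc)
    have himgR : dist (h • w₁) (h • w₂) * dist (h • x₁) (h • z) /
        (dist (h • w₁) (h • z) * dist (h • x₁) (h • w₂)) < δ^2/(8*D^2) := by
      have hco := NNReal.coe_lt_coe.mpr himg
      rwa [crossRatio_coe, Real.coe_toNNReal _ hτpos.le] at hco
    have hinj : Function.Injective (fun x : Z => h • x) := MulAction.injective h
    have d1 : 0 < dist (h • w₁) (h • z) :=
      dist_pos.mpr (fun e => hw1z (hinj e))
    have d2 : 0 < dist (h • x₁) (h • w₂) :=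
      dist_pos.mpr (fun e => hx1w2 (hinj e))
    have hδx : δ ≤ dist (h • x₁) (h • z) := by
      rw [dist_comm]; exact hh1
    -- multiply out
    have e1 : dist (h • w₁) (h • w₂) * dist (h • x₁) (h • z)
        < δ^2/(8*D^2) * (dist (h • w₁) (h • z) * dist (h • x₁) (h • w₂)) :=
      (div_lt_iff₀ (by positivity)).mp himgR
    have e2 : δ^2/(8*D^2) * (dist (h • w₁) (h • z) * dist (h • x₁) (h • w₂))
        ≤ δ^2/(8*D^2) * (D * D) := by
      apply mul_le_mul_of_nonneg_left _ hτpos.le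
      exact mul_le_mul (hdistD _ _) (hdistD _ _) dist_nonneg hDpos.le
    have e3 : δ^2/(8*D^2) * (D * D) = δ/8 * δ := by
      field_simp
    have e4 : dist (h • w₁) (h • w₂) * δ
        ≤ dist (h • w₁) (h • w₂) * dist (h • x₁) (h • z) :=
      mul_le_mul_of_nonneg_left hδx dist_nonneg
    have e5 : dist (h • w₁) (h • w₂) * δ < δ/8 * δ := by
      calc dist (h • w₁) (h • w₂) * δ ≤ _ := e4
        _ < _ := e1
        _ ≤ _ := e2
        _ = _ := e3
    exact lt_of_mul_lt_mul_right e5 hδ.le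
  -- a point far from z
  obtain ⟨w₀, hw₀⟩ : ∃ w₀ : Z, s ≤ dist w₀ z := by
    by_contra hco; push_neg at hco
    have hdl : D ≤ ε/2 := by
      apply Metric.diam_le_of_forall_dist_le (by positivity)
      intro x _ y _
      have htr := dist_triangle x z y
      have h1 := hco x
      have h2 := hco y
      rw [dist_comm z y] at htr
      linarith
    linarith
  set q : Z := h • w₀ with hqdef
  -- generic final step
  have main : ∀ v : G, δ/2 ≤ dist (v • z') q → dist ((h⁻¹ * v) • z') z < ε := by
    intro v hv
    by_contra hcon; push_neg at hcon
    set w : Z := (h⁻¹ * v) • z' with hwdef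
    have hwz : s ≤ dist w z := by
      rw [hsdef]; linarith
    have hwimg : h • w = v • z' := by
      rw [hwdef, smul_smul, mul_inv_cancel_left]
    by_cases hww : w = w₀
    · have hvq : v • z' = q := by rw [← hwimg, hww]
      rw [hvq, dist_self] at hv
      linarith
    · have hk := key w w₀ hww hwz hw₀
      rw [hwimg] at hk
      linarith
  -- the orbit of z' contains two δ-separated points
  obtain ⟨g₀, hg₀⟩ := hfree z'
  have hdd : 0 < dist (g₀ • z') z' := dist_pos.mpr hg₀
  set R : ℝ := min (dist (g₀ • z') z') D with hRdef
  obtain ⟨y, hy⟩ := hperf z' R (lt_min hdd hDpos) (min_le_right _ _)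
  have hy1 : dist y z' < R := Metric.mem_ball.mp hy.1
  have hy2 : R/lam ≤ dist y z' := not_lt.mp (fun hh => hy.2 (Metric.mem_ball.mpr hh))
  have hRpos : 0 < R := lt_min hdd hDpos
  have hyz' : y ≠ z' := by
    intro e; rw [e, dist_self] at hy2
    have : 0 < R/lam := by positivity
    linarith
  have hyg : y ≠ g₀ • z' := by
    intro e; rw [e] at hy1
    have := min_le_left (dist (g₀ • z') z') D
    rw [← hRdef] at this
    linarith
  obtain ⟨u, hu, -, -⟩ := hsep z' (g₀ • z') y (Ne.symm hg₀) (Ne.symm hyz') (Ne.symm hyg)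
  by_cases hc1 : δ/2 ≤ dist (u • z') q
  · exact ⟨h⁻¹ * u, main u hc1⟩
  · push_neg at hc1
    refine ⟨h⁻¹ * (u * g₀), main (u * g₀) ?_⟩
    have hmu : (u * g₀) • z' = u • (g₀ • z') := mul_smul u g₀ z'
    have htr := dist_triangle (u • z') q (u • (g₀ • z'))
    rw [hmu, dist_comm q (u • (g₀ • z'))] at *
    linarith
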